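/- arXiv:2605.20269 — 2 statements merged into one kernel-verified Lean document; each statement's English description precedes it below -/
import Mathlib

section
/- For d ≥ 2, the operator K^{-1}(N) = ((d+2)/(2d))·N − (tr(N)/(2d))·I_d on symmetric d×d matrices satisfies ‖K^{-1}(N)‖_op ≤ ‖N‖_op for every symmetric N, i.e., its operator-norm-to-operator-norm norm is at most 1. -/
open Matrix

/-- Spectral (operator) norm of a square real matrix, via its action on Euclidean space. -/
noncomputable def opNorm {d : ℕ} (M : Matrix (Fin d) (Fin d) ℝ) : ℝ :=
  ‖(Matrix.toEuclideanCLM (𝕜 := ℝ) (n := Fin d) M :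
      EuclideanSpace ℝ (Fin d) →L[ℝ] EuclideanSpace ℝ (Fin d))‖

/-- The operator `K⁻¹(N) = ((d+2)/(2d))·N − (tr(N)/(2d))·I`. -/
noncomputable def Kinv (d : ℕ) (N : Matrix (Fin d) (Fin d) ℝ) : Matrix (Fin d) (Fin d) ℝ :=
  (((d : ℝ) + 2) / (2 * (d : ℝ))) • N - (N.trace / (2 * (d : ℝ))) • (1 : Matrix (Fin d) (Fin d) ℝ)

/-- **`K⁻¹` is an op-norm contraction on symmetric matrices** for `d ≥ 2`. -/
theorem Kinv_opNorm_le (d : ℕ) (hd : 2 ≤ d) :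
    ∀ N : Matrix (Fin d) (Fin d) ℝ, N.IsSymm → opNorm (Kinv d N) ≤ opNorm N := by
  intro N hsymm
  have hN : N.IsHermitian := by
    rwa [Matrix.IsHermitian, Matrix.conjTranspose_eq_transpose_of_trivial]
  have hd0 : (0:ℝ) < d := by
    have : (2:ℝ) ≤ d := by exact_mod_cast hd
    linarith
  set b := hN.eigenvectorBasis with hb
  set lam := hN.eigenvalues with hlam
  set m := opNorm N with hm
  have hm0 : (0:ℝ) ≤ m := by rw [hm, opNorm]; exact norm_nonneg _
  -- trace = sum of eigenvalues
  have htr : N.trace = ∑ i, lam i := by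
    conv_lhs => rw [hN.spectral_theorem]
    rw [Unitary.conjStarAlgAut_apply, Matrix.trace_mul_cycle, Unitary.coe_star_mul_self, one_mul, Matrix.trace_diagonal]
    simp
    rfl
  -- eigen-equation for toEuclideanCLM N
  have hT : ∀ i, Matrix.toEuclideanCLM (𝕜 := ℝ) (n := Fin d) N (b i) = lam i • b i := by
    intro i
    ext j
    have h := congrFun (hN.mulVec_eigenvectorBasis i) j
    simpa [Matrix.ofLp_toEuclideanCLM] using h
  have hnb : ∀ i, ‖b i‖ = 1 := fun i => b.orthonormal.1 i
  -- eigenvalue bound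
  have hlam_le : ∀ i, |lam i| ≤ m := by
    intro i
    have : |lam i| = ‖(Matrix.toEuclideanCLM (𝕜 := ℝ) (n := Fin d) N) (b i)‖ := by
      rw [hT i, norm_smul, Real.norm_eq_abs, hnb i, mul_one]
    rw [this]
    calc ‖(Matrix.toEuclideanCLM (𝕜 := ℝ) (n := Fin d) N) (b i)‖
        ≤ ‖(Matrix.toEuclideanCLM (𝕜 := ℝ) (n := Fin d) N :
            EuclideanSpace ℝ (Fin d) →L[ℝ] EuclideanSpace ℝ (Fin d))‖ * ‖b i‖ :=
          ContinuousLinearMap.le_opNorm _ _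
      _ = m := by rw [hnb i, mul_one, hm, opNorm]
  -- the eigenvalues of Kinv
  set μ : Fin d → ℝ := fun i => ((d:ℝ)+2)/(2*(d:ℝ)) * lam i - N.trace/(2*(d:ℝ)) with hμdef
  -- eigen-equation for Kinv
  have hKmul : ∀ i, Kinv d N *ᵥ ⇑(b i) = μ i • ⇑(b i) := by
    intro i
    simp only [Kinv, Matrix.sub_mulVec, Matrix.smul_mulVec, Matrix.one_mulVec,
      hN.mulVec_eigenvectorBasis i]
    funext j
    simp only [hμdef, Pi.smul_apply, Pi.sub_apply, smul_eq_mul]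
    rw [hb, hN.mulVec_eigenvectorBasis i, Pi.smul_apply, smul_eq_mul, ← hb, ← hlam]
    ring
  have hT' : ∀ i, Matrix.toEuclideanCLM (𝕜 := ℝ) (n := Fin d) (Kinv d N) (b i) = μ i • b i := by
    intro i
    ext j
    have h := congrFun (hKmul i) j
    simpa [Matrix.ofLp_toEuclideanCLM] using h
  -- bound on μ
  have hμ_le : ∀ i, |μ i| ≤ m := by
    intro i
    have hcard : ((Finset.univ.erase i).card : ℝ) = (d:ℝ) - 1 := by
      rw [Finset.card_erase_of_mem (Finset.mem_univ i)]
      simp only [Finset.card_univ, Fintype.card_fin]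
      have : 1 ≤ d := le_trans (by norm_num) hd
      push_cast [Nat.cast_sub this]
      ring
    have hs : |∑ j ∈ Finset.univ.erase i, lam j| ≤ ((d:ℝ)-1) * m := by
      calc |∑ j ∈ Finset.univ.erase i, lam j| ≤ ∑ j ∈ Finset.univ.erase i, |lam j| :=
            Finset.abs_sum_le_sum_abs _ _
        _ ≤ ∑ _j ∈ Finset.univ.erase i, m := Finset.sum_le_sum fun j _ => hlam_le j
        _ = ((d:ℝ)-1) * m := by rw [Finset.sum_const, nsmul_eq_mul, hcard]
    have hsum : ∑ j, lam j = lam i + ∑ j ∈ Finset.univ.erase i, lam j :=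
      (Finset.add_sum_erase _ _ (Finset.mem_univ i)).symm
    have hrw : μ i = (((d:ℝ)+1) * lam i - ∑ j ∈ Finset.univ.erase i, lam j) / (2*(d:ℝ)) := by
      have h0 : μ i = ((d:ℝ)+2)/(2*(d:ℝ)) * lam i - N.trace/(2*(d:ℝ)) := rfl
      rw [h0, htr, hsum]
      field_simp
      ring
    rw [hrw, abs_div, abs_of_pos (by linarith : (0:ℝ) < 2*(d:ℝ)), div_le_iff₀ (by linarith)]
    calc |((d:ℝ)+1) * lam i - ∑ j ∈ Finset.univ.erase i, lam j|
        ≤ |((d:ℝ)+1) * lam i| + |∑ j ∈ Finset.univ.erase i, lam j| := abs_sub _ _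
      _ ≤ ((d:ℝ)+1) * |lam i| + ((d:ℝ)-1) * m := by
          rw [abs_mul, abs_of_pos (by linarith : (0:ℝ) < (d:ℝ)+1)]
          exact add_le_add le_rfl hs
      _ ≤ ((d:ℝ)+1) * m + ((d:ℝ)-1) * m := by
          have := hlam_le i
          nlinarith
      _ = m * (2*(d:ℝ)) := by ring
  -- now the operator norm bound
  rw [show opNorm (Kinv d N) = ‖(Matrix.toEuclideanCLM (𝕜 := ℝ) (n := Fin d) (Kinv d N) :
      EuclideanSpace ℝ (Fin d) →L[ℝ] EuclideanSpace ℝ (Fin d))‖ from rfl]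
  apply ContinuousLinearMap.opNorm_le_bound _ hm0
  intro x
  set T' := Matrix.toEuclideanCLM (𝕜 := ℝ) (n := Fin d) (Kinv d N)
  have hTx : T' x = ∑ i, (μ i * b.repr x i) • b i := by
    conv_lhs => rw [← b.sum_repr x]
    rw [map_sum]
    refine Finset.sum_congr rfl fun i _ => ?_
    rw [_root_.map_smul, hT' i, smul_smul, mul_comm]
  have hrepr : ∀ j, b.repr (T' x) j = μ j * b.repr x j := by
    intro j
    rw [hTx, map_sum]
    simp only [_root_.map_smul, OrthonormalBasis.repr_self]
    rw [WithLp.ofLp_sum, Finset.sum_apply]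
    simp [EuclideanSpace.single_apply]
  have h1 : ‖T' x‖ = Real.sqrt (∑ j, (μ j * b.repr x j)^2) := by
    rw [← b.repr.norm_map (T' x), EuclideanSpace.norm_eq]
    congr 1
    refine Finset.sum_congr rfl fun j _ => ?_
    rw [hrepr j, Real.norm_eq_abs, sq_abs]
  have h2 : m * ‖x‖ = Real.sqrt (∑ j, (m * b.repr x j)^2) := by
    rw [← b.repr.norm_map x, EuclideanSpace.norm_eq]
    rw [show ∑ j, (m * b.repr x j)^2 = m^2 * ∑ j, ‖b.repr x j‖^2 by
      rw [Finset.mul_sum]; refine Finset.sum_congr rfl fun j _ => ?_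
      rw [Real.norm_eq_abs, sq_abs]; ring]
    rw [Real.sqrt_mul (sq_nonneg m), Real.sqrt_sq hm0]
  rw [h1, h2]
  apply Real.sqrt_le_sqrt
  refine Finset.sum_le_sum fun j _ => ?_
  rw [mul_pow, mul_pow]
  have : (μ j)^2 ≤ m^2 := by
    have := hμ_le j
    nlinarith [abs_nonneg (μ j), sq_abs (μ j), neg_abs_le (μ j), le_abs_self (μ j)]
  exact mul_le_mul_of_nonneg_right this (sq_nonneg _)
end

section
/- Let P and Q be orthogonal projectors in R^d of equal rank r. Then ‖(I − P)Q‖_op = ‖P − Q‖_op. -/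
set_option maxHeartbeats 1000000

open Matrix ContinuousLinearMap
open scoped RealInnerProductSpace

section Key

variable {d : ℕ}

local notation "E" => EuclideanSpace ℝ (Fin d)

private lemma contraction_of_proj (e : E →L[ℝ] E) (he2 : e * e = e)
    (hea : IsSelfAdjoint e) (x : E) : ‖e x‖ ≤ ‖x‖ := by
  have hee : e (e x) = e x := by rw [← ContinuousLinearMap.mul_apply, he2]
  have h1 : ⟪e x, e x⟫ = ⟪x, e x⟫ := by
    have h := hea.isSymmetric x (e x)
    simp only [ContinuousLinearMap.coe_coe] at h
    rw [h, hee]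
  have h2 : ‖e x‖ ^ 2 ≤ ‖x‖ * ‖e x‖ := by
    rw [← real_inner_self_eq_norm_sq, h1]
    exact real_inner_le_norm x (e x)
  rcases eq_or_lt_of_le (norm_nonneg (e x)) with h | h
  · rw [← h]; exact norm_nonneg x
  · nlinarith

private theorem key (hd : 1 ≤ d) (p q : E →L[ℝ] E)
    (hp2 : p * p = p) (hpa : IsSelfAdjoint p)
    (hq2 : q * q = q) (hqa : IsSelfAdjoint q)
    (hrank : Module.finrank ℝ (LinearMap.range (p : E →ₗ[ℝ] E)) =
             Module.finrank ℝ (LinearMap.range (q : E →ₗ[ℝ] E))) :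
    ‖(1 - p) * q‖ = ‖p - q‖ := by
  haveI : Nonempty (Fin d) := ⟨⟨0, hd⟩⟩
  have hsym : ∀ (a : E →L[ℝ] E), IsSelfAdjoint a → ∀ x y : E, ⟪a x, y⟫ = ⟪x, a y⟫ := by
    intro a ha x y
    have h := ha.isSymmetric x y
    simpa only [ContinuousLinearMap.coe_coe] using h
  set S : E →L[ℝ] E := p - q with hSdef
  set A : E →L[ℝ] E := (1 - p) * q with hAdef
  have hp2' : ∀ x : E →L[ℝ] E, p * (p * x) = p * x := fun x => by rw [← mul_assoc, hp2]
  have hq2' : ∀ x : E →L[ℝ] E, q * (q * x) = q * x := fun x => by rw [← mul_assoc, hq2]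
  have h1p2 : (1 - p) * (1 - p) = 1 - p := by
    simp only [sub_mul, mul_sub, one_mul, mul_one, hp2]; abel
  have h1pa : IsSelfAdjoint (1 - p) := by
    rw [isSelfAdjoint_iff'] at *
    rw [map_sub, hpa]
    congr 1
    exact adjoint_id
  have hSa : IsSelfAdjoint S := by
    rw [isSelfAdjoint_iff'] at *
    rw [hSdef, map_sub, hpa, hqa]
  have hSS : S * S = p + q - p * q - q * p := by
    simp only [hSdef, sub_mul, mul_sub, hp2, hq2]; abel
  have hTq : (S * S) * q = q * (S * S) := by
    rw [hSS]
    simp only [sub_mul, mul_sub, add_mul, mul_add, mul_assoc, hp2, hq2, hp2', hq2']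
    abel
  have hTp : (S * S) * p = p * (S * S) := by
    rw [hSS]
    simp only [sub_mul, mul_sub, add_mul, mul_add, mul_assoc, hp2, hq2, hp2', hq2']
    abel
  have hq1pq : q * ((1 - p) * q) = (S * S) * q := by
    rw [hSS]
    simp only [sub_mul, mul_sub, add_mul, mul_add, one_mul, mul_assoc, hp2, hq2, hp2', hq2']
    abel
  -- easy direction
  have easy : ‖A‖ ≤ ‖S‖ := by
    have h1p0 : (1 - p) * p = 0 := by rw [sub_mul, one_mul, hp2, sub_self]
    have hAe : A = (1 - p) * (q - p) := by rw [hAdef, mul_sub, h1p0, sub_zero]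
    have hb : ‖(1 - p) * (q - p)‖ ≤ ‖q - p‖ := by
      refine opNorm_le_bound _ (norm_nonneg _) fun x => ?_
      calc ‖((1 - p) * (q - p)) x‖ = ‖(1 - p) ((q - p) x)‖ := rfl
        _ ≤ ‖(q - p) x‖ := contraction_of_proj _ h1p2 h1pa _
        _ ≤ ‖q - p‖ * ‖x‖ := le_opNorm _ _
    rw [hAe]
    calc ‖(1 - p) * (q - p)‖ ≤ ‖q - p‖ := hb
      _ = ‖S‖ := by rw [hSdef, norm_sub_rev]
  -- hard direction
  have hard : ‖S‖ ≤ ‖A‖ := by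
    rcases eq_or_lt_of_le (norm_nonneg S) with hS0 | hSpos
    · rw [← hS0]; exact norm_nonneg A
    set ν : ℝ := ‖S‖ with hν
    obtain ⟨x, hx1, hSx⟩ : ∃ x : E, ‖x‖ = 1 ∧ ‖S x‖ = ν := by
      have hcs : IsCompact (Metric.sphere (0 : E) 1) := isCompact_sphere 0 1
      have hne : (Metric.sphere (0 : E) 1).Nonempty := by
        refine ⟨EuclideanSpace.single ⟨0, hd⟩ (1 : ℝ), ?_⟩
        rw [mem_sphere_zero_iff_norm, EuclideanSpace.norm_single, norm_one]
      obtain ⟨x, hx, hmax⟩ := hcs.exists_isMaxOn hne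
        (Continuous.continuousOn (S.continuous.norm))
      rw [mem_sphere_zero_iff_norm] at hx
      refine ⟨x, hx, le_antisymm (by simpa [hx] using S.le_opNorm x) ?_⟩
      refine opNorm_le_of_unit_norm (norm_nonneg _) fun y hy => ?_
      exact hmax (by simpa [mem_sphere_zero_iff_norm] using hy)
    -- x is an eigenvector of S∘S with eigenvalue ν²
    have hTx : S (S x) = (ν ^ 2) • x := by
      have hin : ⟪S (S x), x⟫ = ν ^ 2 := by
        rw [hsym S hSa (S x) x, real_inner_self_eq_norm_sq, hSx]
      have hnn : ‖S (S x)‖ ≤ ν ^ 2 := by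
        calc ‖S (S x)‖ ≤ ‖S‖ * ‖S x‖ := le_opNorm _ _
          _ = ν ^ 2 := by rw [hSx, ← hν, sq]
      have hz : ‖S (S x) - (ν ^ 2) • x‖ ^ 2 ≤ 0 := by
        rw [norm_sub_sq_real, real_inner_smul_right, hin, norm_smul, hx1]
        have h2 : ‖(ν ^ 2 : ℝ)‖ = ν ^ 2 := by
          rw [Real.norm_eq_abs, abs_of_nonneg (sq_nonneg ν)]
        rw [h2]
        nlinarith [norm_nonneg (S (S x))]
      have hnz : ‖S (S x) - (ν ^ 2) • x‖ = 0 := by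
        nlinarith [norm_nonneg (S (S x) - (ν ^ 2) • x)]
      exact sub_eq_zero.mp (norm_eq_zero.mp hnz)
    by_cases hcase : ∀ v : E, S (S v) = (ν ^ 2) • v → q v = 0
    · -- q kills the whole eigenspace
      have hqx : q x = 0 := hcase x hTx
      have hqpx : q (p x) = 0 := by
        apply hcase
        have h1 : S (S (p x)) = ((S * S) * p) x := rfl
        rw [hTp] at h1
        have h2 : (p * (S * S)) x = p (S (S x)) := rfl
        rw [h1, h2, hTx]
        exact p.map_smul _ _
      have hppx : p (p x) = p x := by rw [← ContinuousLinearMap.mul_apply, hp2]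
      have hSx' : S x = p x := by
        rw [hSdef]; simp [ContinuousLinearMap.sub_apply, hqx]
      have hSpx : S (p x) = p x := by
        rw [hSdef]; simp [ContinuousLinearMap.sub_apply, hppx, hqpx]
      have hpx : p x = (ν ^ 2) • x := by
        calc p x = S (p x) := hSpx.symm
          _ = S (S x) := by rw [hSx']
          _ = (ν ^ 2) • x := hTx
      have hx0 : x ≠ 0 := by
        intro h; rw [h, norm_zero] at hx1; norm_num at hx1
      have hν2 : ν ^ 2 = 1 := by
        have hchain : (ν ^ 2 * ν ^ 2) • x = (ν ^ 2) • x := by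
          calc (ν ^ 2 * ν ^ 2) • x = ν ^ 2 • (ν ^ 2 • x) := (smul_smul _ _ _).symm
            _ = ν ^ 2 • (p x) := by rw [← hpx]
            _ = p ((ν ^ 2) • x) := (map_smul p _ _).symm
            _ = p (p x) := by rw [← hpx]
            _ = p x := hppx
            _ = (ν ^ 2) • x := hpx
        have hz2 : (ν ^ 2 * ν ^ 2 - ν ^ 2) • x = 0 := by
          rw [sub_smul, hchain, sub_self]
        have h8 := (smul_eq_zero.mp hz2).resolve_right hx0
        have h9 : ν ^ 2 * (ν ^ 2 - 1) = 0 := by linear_combination h8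
        rcases mul_eq_zero.mp h9 with h | h
        · nlinarith
        · linarith
      have hν1 : ν = 1 := by nlinarith
      -- find a nonzero z with q z = z and p z = 0
      have hz : ∃ z : E, q z = z ∧ p z = 0 ∧ z ≠ 0 := by
        by_contra hno
        push_neg at hno
        set Vp := LinearMap.range (p : E →ₗ[ℝ] E) with hVp
        set Vq := LinearMap.range (q : E →ₗ[ℝ] E) with hVq
        have hmem : ∀ z ∈ Vq, (p : E →ₗ[ℝ] E) z ∈ Vp := fun z _ =>
          LinearMap.mem_range_self _ z
        set g : Vq →ₗ[ℝ] Vp := LinearMap.restrict (p : E →ₗ[ℝ] E) hmem with hg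
        have hqfix : ∀ z : E, z ∈ Vq → q z = z := by
          rintro z ⟨w, rfl⟩
          show q ((q : E →ₗ[ℝ] E) w) = (q : E →ₗ[ℝ] E) w
          simp only [ContinuousLinearMap.coe_coe]
          rw [← ContinuousLinearMap.mul_apply, hq2]
        have hginj : Function.Injective g := by
          refine (injective_iff_map_eq_zero g).mpr ?_
          rintro ⟨z, hzmem⟩ hz0
          have h1 : (p : E →ₗ[ℝ] E) z = 0 := by
            have h2 := congrArg Subtype.val hz0
            simpa [hg, LinearMap.restrict_coe_apply] using h2
          have h2 : p z = 0 := by simpa using h1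
          exact Subtype.ext (hno z (hqfix z hzmem) h2)
        have hsurj : Function.Surjective g :=
          (LinearMap.injective_iff_surjective_of_finrank_eq_finrank hrank.symm).mp hginj
        have hpxx : p x = x := by rw [hpx, hν2, one_smul]
        have hxVp : x ∈ Vp := ⟨x, by simpa using hpxx⟩
        obtain ⟨⟨z, hzmem⟩, hgz⟩ := hsurj ⟨x, hxVp⟩
        have hpzx : p z = x := by
          have h2 := congrArg Subtype.val hgz
          simpa [hg, LinearMap.restrict_coe_apply] using h2
        have hcontra : (1 : ℝ) = 0 := by
          calc (1 : ℝ) = ⟪x, x⟫ := by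
                rw [real_inner_self_eq_norm_sq, hx1]; norm_num
            _ = ⟪p z, x⟫ := by rw [hpzx]
            _ = ⟪z, p x⟫ := hsym p hpa z x
            _ = ⟪z, x⟫ := by rw [hpxx]
            _ = ⟪q z, x⟫ := by rw [hqfix z hzmem]
            _ = ⟪z, q x⟫ := hsym q hqa z x
            _ = 0 := by rw [hqx, inner_zero_right]
        norm_num at hcontra
      obtain ⟨z, hqz, hpz, hz0⟩ := hz
      have hAz : A z = z := by
        show ((1 - p) * q) z = z
        rw [ContinuousLinearMap.mul_apply, hqz]
        simp [ContinuousLinearMap.sub_apply, hpz]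
      have hle := A.le_opNorm z
      rw [hAz] at hle
      have hzpos : 0 < ‖z‖ := norm_pos_iff.mpr hz0
      have h1A : 1 ≤ ‖A‖ := by
        rw [← mul_le_mul_iff_of_pos_right hzpos, one_mul]
        exact hle
      rw [hν1]; exact h1A
    · -- some eigenvector survives q
      push_neg at hcase
      obtain ⟨v, hveig, hqv⟩ := hcase
      set u : E := q v with hu
      have hqu : q u = u := by
        rw [hu, ← ContinuousLinearMap.mul_apply, hq2]
      have hTu : S (S u) = (ν ^ 2) • u := by
        have h1 : S (S u) = ((S * S) * q) v := rfl
        rw [hTq] at h1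
        have h2 : (q * (S * S)) v = q (S (S v)) := rfl
        rw [h1, h2, hveig, ContinuousLinearMap.map_smul, ← hu]
      have hAu : A u = (1 - p) u := by
        show ((1 - p) * q) u = (1 - p) u
        rw [ContinuousLinearMap.mul_apply, hqu]
      have hq1pu : q ((1 - p) u) = (ν ^ 2) • u := by
        have h1 : q ((1 - p) u) = (q * ((1 - p) * q)) u := by
          conv_lhs => rw [← hqu]
          rfl
        rw [h1, hq1pq]
        show (S * S) (q u) = _
        rw [hqu]
        exact hTu
      have h1pu : (1 - p) ((1 - p) u) = (1 - p) u := by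
        rw [← ContinuousLinearMap.mul_apply, h1p2]
      have hstep : ⟪u, (1 - p) u⟫ = ν ^ 2 * ‖u‖ ^ 2 := by
        have e1 : ⟪u, (1 - p) u⟫ = ⟪q u, (1 - p) u⟫ := by rw [hqu]
        rw [e1, hsym q hqa u ((1 - p) u), hq1pu, real_inner_smul_right,
          real_inner_self_eq_norm_sq]
      have hnorm : ‖A u‖ ^ 2 = ν ^ 2 * ‖u‖ ^ 2 := by
        rw [hAu, ← real_inner_self_eq_norm_sq, hsym _ h1pa u ((1 - p) u), h1pu, hstep]
      have hupos : 0 < ‖u‖ := norm_pos_iff.mpr hqv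
      have hAueq : ‖A u‖ = ν * ‖u‖ := by
        have h2 : ‖A u‖ ^ 2 = (ν * ‖u‖) ^ 2 := by rw [hnorm]; ring
        have h3 : 0 ≤ ν * ‖u‖ := mul_nonneg (le_of_lt hSpos) (norm_nonneg u)
        nlinarith [norm_nonneg (A u), h2, h3]
      have hle := A.le_opNorm u
      rw [hAueq] at hle
      exact le_of_mul_le_mul_right hle hupos
  linarith [easy, hard]

end Key

private lemma rank_toEuclideanCLM {d : ℕ} (M : Matrix (Fin d) (Fin d) ℝ) :
    Module.finrank ℝ (LinearMap.range
      ((Matrix.toEuclideanCLM (𝕜 := ℝ) (n := Fin d) M :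
        EuclideanSpace ℝ (Fin d) →L[ℝ] EuclideanSpace ℝ (Fin d)) :
        EuclideanSpace ℝ (Fin d) →ₗ[ℝ] EuclideanSpace ℝ (Fin d))) = M.rank := by
  rw [Matrix.coe_toEuclideanCLM_eq_toEuclideanLin, Matrix.toEuclideanLin_eq_toLin_orthonormal,
    Matrix.rank_eq_finrank_range_toLin M (EuclideanSpace.basisFun (Fin d) ℝ).toBasis
      (EuclideanSpace.basisFun (Fin d) ℝ).toBasis]

/-- **Same-rank projector identity**: for orthogonal projectors `P, Q` of equal rank,
`‖(I − P)Q‖ = ‖P − Q‖` in operator norm. -/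
theorem projector_norm_identity
    (d r : ℕ) (hd : 1 ≤ d) (hr : 1 ≤ r) (hrd : r ≤ d)
    (P Q : Matrix (Fin d) (Fin d) ℝ)
    (hPsym : P.IsSymm) (hPidem : P * P = P) (hPrank : P.rank = r)
    (hQsym : Q.IsSymm) (hQidem : Q * Q = Q) (hQrank : Q.rank = r) :
    opNorm (((1 : Matrix (Fin d) (Fin d) ℝ) - P) * Q) = opNorm (P - Q) := by
  have hPstar : star P = P := by
    rw [Matrix.star_eq_conjTranspose, Matrix.conjTranspose_eq_transpose_of_trivial]
    exact hPsym
  have hQstar : star Q = Q := by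
    rw [Matrix.star_eq_conjTranspose, Matrix.conjTranspose_eq_transpose_of_trivial]
    exact hQsym
  unfold _root_.opNorm
  rw [_root_.map_mul, _root_.map_sub, _root_.map_sub, _root_.map_one]
  refine key hd _ _ ?_ ?_ ?_ ?_ ?_
  · rw [← _root_.map_mul, hPidem]
  · show star _ = _
    rw [← map_star, hPstar]
  · rw [← _root_.map_mul, hQidem]
  · show star _ = _
    rw [← map_star, hQstar]
  · rw [rank_toEuclideanCLM, rank_toEuclideanCLM, hPrank, hQrank]
end
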